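/- Let G be a connected simple graph on vertex set V, let W ⊆ V be a nonempty proper subset of vertices inducing a connected subgraph of G, and let v be a vertex with v ∉ W. Let G/W be the contraction of W: the simple graph on (V \ W) ∪ {⋆} in which two vertices of V \ W are adjacent iff they are adjacent in G, and a vertex x ∈ V \ W is adjacent to ⋆ iff x is adjacent in G to some vertex of W. Then v is an articulation point of G if and only if v is an articulation point of G/W. -/

import Mathlib

lemma aux_reach_map {V1 V2 : Type*} {G1 : SimpleGraph V1} {G2 : SimpleGraph V2}
    (f : V1 → V2) (h : ∀ a b, G1.Adj a b → G2.Reachable (f a) (f b)) {u w : V1}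
    (huv : G1.Reachable u w) : G2.Reachable (f u) (f w) := by
  obtain ⟨p⟩ := huv
  induction p with
  | nil => exact SimpleGraph.Reachable.refl _
  | cons hadj _ ih => exact (h _ _ hadj).trans ih


/-- The contraction `G/W` of a set `W` of vertices of `G`: the simple graph on
`(V \ W) ∪ {⋆}` (encoded as `Option ↥(Wᶜ)`, with `none` playing the role of `⋆`) in
which two vertices of `V \ W` are adjacent iff they are adjacent in `G`, and a vertex
`x ∈ V \ W` is adjacent to `⋆` iff `x` is adjacent in `G` to some vertex of `W`. -/
def contractSet {V : Type*} (G : SimpleGraph V) (W : Set V) :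
    SimpleGraph (Option ↥(Wᶜ : Set V)) where
  Adj x y :=
    match x, y with
    | some a, some b => G.Adj a b
    | some a, none => ∃ w ∈ W, G.Adj (a : V) w
    | none, some b => ∃ w ∈ W, G.Adj (b : V) w
    | none, none => False
  symm := ⟨by
    rintro (_ | a) (_ | b) h
    · exact h.elim
    · exact h
    · exact h
    · exact h.symm⟩
  loopless := ⟨by
    rintro (_ | a) h
    · exact h.elim
    · exact G.ne_of_adj h rfl⟩

/-- `v` is an articulation point (cut vertex) of `G`: the induced subgraph of `G` on the
complement of `{v}` is disconnected. -/
def IsArticulationPoint {V : Type*} (G : SimpleGraph V) (v : V) : Prop :=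
  ¬ (G.induce ({v}ᶜ : Set V)).Connected

/-- Let `G` be a connected simple graph on vertex set `V`, `W` a
nonempty proper subset of vertices inducing a connected subgraph of `G`, and `v ∉ W`
a vertex.  Then `v` is an articulation point of `G` if and only if `v` is an
articulation point of the contraction `G/W`. -/
theorem stmt_7 {V : Type*} (G : SimpleGraph V) (hG : G.Connected) (W : Set V)
    (hWne : W.Nonempty) (hWproper : W ≠ Set.univ) (hWconn : (G.induce W).Connected)
    (v : V) (hv : v ∉ W) :
    IsArticulationPoint G v ↔
      IsArticulationPoint (contractSet G W) (some ⟨v, hv⟩) := by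
  classical
  obtain ⟨w0, hw0⟩ := hWne
  have hw0v : w0 ≠ v := fun h => hv (h ▸ hw0)
  have hnone : (none : Option ↥(Wᶜ : Set V)) ∈
      ({some ⟨v, hv⟩}ᶜ : Set (Option ↥(Wᶜ : Set V))) := by simp
  have hsome : ∀ (a : ↥(Wᶜ : Set V)), (a : V) ≠ v →
      (some a) ∈ ({some ⟨v, hv⟩}ᶜ : Set (Option ↥(Wᶜ : Set V))) := by
    intro a hav
    simp only [Set.mem_compl_iff, Set.mem_singleton_iff, Option.some.injEq]
    exact fun h => hav (congrArg Subtype.val h)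
  have hsome' : ∀ (a : ↥(Wᶜ : Set V)),
      (some a) ∈ ({some ⟨v, hv⟩}ᶜ : Set (Option ↥(Wᶜ : Set V))) → (a : V) ≠ v := by
    intro a ha hav
    exact ha (by simp only [Set.mem_singleton_iff, Option.some.injEq]; exact Subtype.ext hav)
  -- reachability within W lifts to G - v
  have hWreach : ∀ (w w' : V) (hw : w ∈ W) (hw' : w' ∈ W),
      (G.induce ({v}ᶜ : Set V)).Reachable ⟨w, fun h => hv (h ▸ hw)⟩
        ⟨w', fun h => hv (h ▸ hw')⟩ := by
    intro w w' hw hw'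
    have hr := hWconn.preconnected ⟨w, hw⟩ ⟨w', hw'⟩
    exact aux_reach_map (G2 := G.induce ({v}ᶜ : Set V))
      (fun x => (⟨x.1, fun h => hv (h ▸ x.2)⟩ : ({v}ᶜ : Set V)))
      (fun a b hab => SimpleGraph.Adj.reachable (by exact hab)) hr
  -- the forward map
  set f : ({v}ᶜ : Set V) → ({some ⟨v, hv⟩}ᶜ : Set (Option ↥(Wᶜ : Set V))) :=
    fun x => if hx : (x : V) ∈ W then ⟨none, hnone⟩
      else ⟨some ⟨x, hx⟩, hsome ⟨x, hx⟩ x.2⟩ with hf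
  have hfW : ∀ (x : ({v}ᶜ : Set V)) (hx : (x : V) ∈ W), f x = ⟨none, hnone⟩ := by
    intro x hx; rw [hf]; exact dif_pos hx
  have hfnW : ∀ (x : ({v}ᶜ : Set V)) (hx : (x : V) ∉ W),
      f x = ⟨some ⟨x, hx⟩, hsome ⟨x, hx⟩ x.2⟩ := by
    intro x hx; rw [hf]; exact dif_neg hx
  -- the backward map
  set g : ({some ⟨v, hv⟩}ᶜ : Set (Option ↥(Wᶜ : Set V))) → ({v}ᶜ : Set V) :=
    fun x => match x with
      | ⟨none, _⟩ => ⟨w0, hw0v⟩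
      | ⟨some a, h⟩ => ⟨a, hsome' a h⟩ with hg
  have hgnone : ∀ h, g ⟨none, h⟩ = ⟨w0, hw0v⟩ := fun h => by rw [hg]
  have hgsome : ∀ a h, g ⟨some a, h⟩ = ⟨a, hsome' a h⟩ := fun a h => by rw [hg]
  -- f sends edges to reachability
  have hfadj : ∀ a b, (G.induce ({v}ᶜ : Set V)).Adj a b →
      ((contractSet G W).induce ({some ⟨v, hv⟩}ᶜ : Set (Option ↥(Wᶜ : Set V)))).Reachable
        (f a) (f b) := by
    intro a b hab
    have hab' : G.Adj a b := hab
    by_cases ha : (a : V) ∈ W <;> by_cases hb : (b : V) ∈ W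
    · rw [hfW a ha, hfW b hb]
    · rw [hfW a ha, hfnW b hb]
      exact SimpleGraph.Adj.reachable
        (show (contractSet G W).Adj none (some ⟨b, hb⟩) from ⟨a, ha, hab'.symm⟩)
    · rw [hfnW a ha, hfW b hb]
      exact SimpleGraph.Adj.reachable
        (show (contractSet G W).Adj (some ⟨a, ha⟩) none from ⟨b, hb, hab'⟩)
    · rw [hfnW a ha, hfnW b hb]
      exact SimpleGraph.Adj.reachable
        (show (contractSet G W).Adj (some ⟨a, ha⟩) (some ⟨b, hb⟩) from hab')
  -- g sends edges to reachability
  have hgadj : ∀ a b,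
      ((contractSet G W).induce ({some ⟨v, hv⟩}ᶜ : Set (Option ↥(Wᶜ : Set V)))).Adj a b →
      (G.induce ({v}ᶜ : Set V)).Reachable (g a) (g b) := by
    rintro ⟨(_ | a), ha⟩ ⟨(_ | b), hb⟩ hab
    · exact (hab : False).elim
    · obtain ⟨w, hw, hadj⟩ := (hab : ∃ w ∈ W, G.Adj (b : V) w)
      rw [hgnone ha, hgsome b hb]
      refine (hWreach w0 w hw0 hw).trans (SimpleGraph.Adj.reachable ?_)
      exact (show G.Adj w (b : V) from hadj.symm)
    · obtain ⟨w, hw, hadj⟩ := (hab : ∃ w ∈ W, G.Adj (a : V) w)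
      rw [hgsome a ha, hgnone hb]
      refine SimpleGraph.Reachable.trans (SimpleGraph.Adj.reachable ?_) (hWreach w w0 hw hw0)
      exact (show G.Adj (a : V) w from hadj)
    · rw [hgsome a ha, hgsome b hb]
      exact SimpleGraph.Adj.reachable (show G.Adj (a : V) (b : V) from hab)
  -- x is reachable from g (f x)
  have hgf : ∀ x : ({v}ᶜ : Set V), (G.induce ({v}ᶜ : Set V)).Reachable x (g (f x)) := by
    intro x
    by_cases hx : (x : V) ∈ W
    · rw [hfW x hx, hgnone hnone]
      exact hWreach x w0 hx hw0
    · rw [hfnW x hx, hgsome ⟨x, hx⟩ (hsome ⟨x, hx⟩ x.2)]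
  unfold IsArticulationPoint
  constructor
  · intro h hc
    apply h
    rw [SimpleGraph.connected_iff]
    refine ⟨fun x y => ?_, ⟨⟨w0, hw0v⟩⟩⟩
    have hr := aux_reach_map g hgadj (hc.preconnected (f x) (f y))
    exact (hgf x).trans (hr.trans (hgf y).symm)
  · intro h hc
    apply h
    rw [SimpleGraph.connected_iff]
    refine ⟨fun x y => ?_, ⟨⟨none, hnone⟩⟩⟩
    have hsurj : ∀ z : ({some ⟨v, hv⟩}ᶜ : Set (Option ↥(Wᶜ : Set V))), ∃ z', f z' = z := by
      rintro ⟨(_ | a), hz⟩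
      · exact ⟨⟨w0, hw0v⟩, hfW ⟨w0, hw0v⟩ hw0⟩
      · refine ⟨⟨a, hsome' a hz⟩, ?_⟩
        rw [hfnW ⟨a, hsome' a hz⟩ a.2]
    obtain ⟨x', hx'⟩ := hsurj x
    obtain ⟨y', hy'⟩ := hsurj y
    rw [← hx', ← hy']
    exact aux_reach_map f hfadj (hc.preconnected x' y')
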